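/- Positivity of the admissible coupling constant κ₀: Let c_E ≥ 1, c_G > 0, β > 0, δ > 0, K₂ > 0, and let d ≥ 1 be an integer. With G(a,t) := Σ_{n=1}^∞ [ 2 c_E (3√2 √d c_G (1 ∨ √t) Γ(1/2) √t)ⁿ aⁿ ] / ( n Γ(n/2) ) + c_E exp{ − (2β/δ − (K₂δ/(2β)) a ) t } for a ≥ 0, t ≥ 0, there exists a > 0 such that inf_{t ≥ 0} G(a,t) < 1; consequently κ₀ := sup{ a > 0 : inf_{t≥0} G(a,t) < 1 } is strictly positive. -/

import Mathlib

open MeasureTheory Real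

set_option maxHeartbeats 800000

lemma one_le_sqrt_pi : (1:ℝ) ≤ Real.sqrt Real.pi := by
  nlinarith [Real.sq_sqrt Real.pi_pos.le, Real.sqrt_nonneg Real.pi, Real.pi_gt_three]

lemma gamma_half_ge (n : ℕ) : (1:ℝ)/2 ≤ Real.Gamma (((n:ℝ)+1)/2) := by
  induction n using Nat.strong_induction_on with
  | _ n ih =>
    match n with
    | 0 => rw [show (((0:ℕ):ℝ)+1)/2 = 1/2 by norm_num, Real.Gamma_one_half_eq]
           linarith [one_le_sqrt_pi]
    | 1 => rw [show (((1:ℕ):ℝ)+1)/2 = 1 by norm_num, Real.Gamma_one]; norm_num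
    | 2 =>
      rw [show (((2:ℕ):ℝ)+1)/2 = 1/2 + 1 by norm_num,
        Real.Gamma_add_one (by norm_num), Real.Gamma_one_half_eq]
      linarith [one_le_sqrt_pi]
    | (m+3) =>
      have ihm := ih (m+1) (by omega)
      have hx : (1:ℝ) ≤ ((m:ℝ)+2)/2 := by
        have : (0:ℝ) ≤ (m:ℝ) := Nat.cast_nonneg m
        linarith
      have hcast : ((((m+3:ℕ)):ℝ)+1)/2 = ((m:ℝ)+2)/2 + 1 := by push_cast; ring
      have hcast2 : ((((m+1:ℕ)):ℝ)+1)/2 = ((m:ℝ)+2)/2 := by push_cast; ring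
      rw [hcast, Real.Gamma_add_one (by linarith)]
      rw [hcast2] at ihm
      nlinarith

/-- The contraction factor
`G(a,t) = ∑_{n≥1} 2 c_E (3√2 √d c_G (1 ∨ √t) Γ(1/2) √t)ⁿ aⁿ / (n Γ(n/2))
          + c_E e^{−(2β/δ − (K₂δ/(2β)) a) t}`. -/
noncomputable def contractionG (c_E c_G β δ K₂ : ℝ) (d : ℕ) (a t : ℝ) : ℝ :=
  (∑' n : ℕ,
      2 * c_E * (3 * Real.sqrt 2 * Real.sqrt d * c_G * (max 1 (Real.sqrt t)) *
            Real.Gamma (1 / 2) * Real.sqrt t) ^ (n + 1) * a ^ (n + 1) /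
        (((n : ℝ) + 1) * Real.Gamma (((n : ℝ) + 1) / 2))) +
    c_E * Real.exp (-(2 * β / δ - (K₂ * δ / (2 * β)) * a) * t)

/-- Positivity of the admissible coupling constant `κ₀`: there exists `a > 0`
with `inf_{t ≥ 0} G(a,t) < 1`; consequently
`κ₀ = sup{ a > 0 : inf_{t ≥ 0} G(a,t) < 1 }` is strictly positive. -/
theorem kappa0_positive
    (c_E c_G β δ K₂ : ℝ) (d : ℕ)
    (hcE : 1 ≤ c_E) (hcG : 0 < c_G) (hβ : 0 < β) (hδ : 0 < δ) (hK₂ : 0 < K₂)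
    (hd : 1 ≤ d) :
    (∃ a > (0:ℝ),
      sInf ((fun t => contractionG c_E c_G β δ K₂ d a t) '' Set.Ici 0) < 1) ∧
    0 < sSup {a : ℝ | 0 < a ∧
      sInf ((fun t => contractionG c_E c_G β δ K₂ d a t) '' Set.Ici 0) < 1} := by
  have hcE0 : (0:ℝ) < c_E := lt_of_lt_of_le one_pos hcE
  -- the time at which we evaluate G
  set T : ℝ := δ/β * Real.log (4*c_E) with hTdef
  have hlogpos : 0 < Real.log (4*c_E) :=
    Real.log_pos (by nlinarith)
  have hT : 0 < T := by positivity
  -- the coefficient C at time T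
  set C : ℝ := 3 * Real.sqrt 2 * Real.sqrt d * c_G * (max 1 (Real.sqrt T)) *
      Real.Gamma (1/2) * Real.sqrt T with hCdef
  have hC : 0 < C := by
    have hd' : (0:ℝ) < Real.sqrt d := Real.sqrt_pos.mpr (by exact_mod_cast Nat.lt_of_lt_of_le Nat.zero_lt_one hd)
    have hG : (0:ℝ) < Real.Gamma (1/2) := by positivity
    have hmax : (0:ℝ) < max 1 (Real.sqrt T) := lt_of_lt_of_le one_pos (le_max_left _ _)
    have hsT : 0 < Real.sqrt T := Real.sqrt_pos.mpr hT
    positivity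
  -- the coupling constant
  set a : ℝ := min (1/(16*c_E*C)) (2*β^2/(K₂*δ^2)) with hadef
  have ha : 0 < a := lt_min (by positivity) (by positivity)
  -- x = C * a
  set x : ℝ := C * a with hxdef
  have hx0 : 0 < x := mul_pos hC ha
  have hx1 : x ≤ 1/(16*c_E) := by
    have h1 : a ≤ 1/(16*c_E*C) := min_le_left _ _
    have := mul_le_mul_of_nonneg_left h1 hC.le
    calc x = C * a := rfl
      _ ≤ C * (1/(16*c_E*C)) := this
      _ = 1/(16*c_E) := by field_simp
  have hx16 : x ≤ 1/16 := by
    have : 1/(16*c_E) ≤ 1/16 := by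
      rw [div_le_div_iff₀ (by positivity) (by norm_num)]; nlinarith
    linarith
  have hxlt1 : x < 1 := by linarith
  -- bound the series terms
  have hterm : ∀ n : ℕ,
      2 * c_E * C ^ (n + 1) * a ^ (n + 1) /
        (((n : ℝ) + 1) * Real.Gamma (((n : ℝ) + 1) / 2)) ≤ (4*c_E*x) * x^n := by
    intro n
    have hΓ := gamma_half_ge n
    have hΓpos : (0:ℝ) < Real.Gamma (((n:ℝ)+1)/2) := by positivity
    have hn1 : (1:ℝ) ≤ (n:ℝ) + 1 := by
      have : (0:ℝ) ≤ (n:ℝ) := Nat.cast_nonneg n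
      linarith
    have hden : (1:ℝ)/2 ≤ ((n:ℝ)+1) * Real.Gamma (((n:ℝ)+1)/2) := by nlinarith
    have hdenpos : (0:ℝ) < ((n:ℝ)+1) * Real.Gamma (((n:ℝ)+1)/2) := by positivity
    rw [div_le_iff₀ hdenpos]
    have hxp : C ^ (n+1) * a ^ (n+1) = x^(n+1) := (mul_pow C a (n+1)).symm
    have hxn : (0:ℝ) ≤ x^(n+1) := by positivity
    have key := mul_le_mul_of_nonneg_left hden (show (0:ℝ) ≤ 4*c_E*x^(n+1) by positivity)
    calc 2 * c_E * C ^ (n + 1) * a ^ (n + 1) = 2*c_E*(C^(n+1)*a^(n+1)) := by ring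
      _ = 2*c_E*x^(n+1) := by rw [hxp]
      _ = (4*c_E*x^(n+1)) * (1/2) := by ring
      _ ≤ (4*c_E*x^(n+1)) * (((n:ℝ)+1) * Real.Gamma (((n:ℝ)+1)/2)) := key
      _ = 4*c_E*x*x^n * (((n:ℝ)+1) * Real.Gamma (((n:ℝ)+1)/2)) := by ring
  have htermnn : ∀ n : ℕ, (0:ℝ) ≤
      2 * c_E * C ^ (n + 1) * a ^ (n + 1) /
        (((n : ℝ) + 1) * Real.Gamma (((n : ℝ) + 1) / 2)) := by
    intro n
    have : (0:ℝ) ≤ C := hC.le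
    have : (0:ℝ) ≤ a := ha.le
    positivity
  have hsumg : Summable (fun n : ℕ => (4*c_E*x) * x^n) :=
    (summable_geometric_of_lt_one hx0.le hxlt1).mul_left _
  have hsumf : Summable (fun n : ℕ =>
      2 * c_E * C ^ (n + 1) * a ^ (n + 1) /
        (((n : ℝ) + 1) * Real.Gamma (((n : ℝ) + 1) / 2))) :=
    Summable.of_nonneg_of_le htermnn hterm hsumg
  have htsum : (∑' n : ℕ, 2 * c_E * C ^ (n + 1) * a ^ (n + 1) /
        (((n : ℝ) + 1) * Real.Gamma (((n : ℝ) + 1) / 2))) ≤ (4*c_E*x) * (1-x)⁻¹ := by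
    calc (∑' n : ℕ, 2 * c_E * C ^ (n + 1) * a ^ (n + 1) /
        (((n : ℝ) + 1) * Real.Gamma (((n : ℝ) + 1) / 2)))
        ≤ ∑' n : ℕ, (4*c_E*x) * x^n := Summable.tsum_le_tsum hterm hsumf hsumg
      _ = (4*c_E*x) * ∑' n : ℕ, x^n := tsum_mul_left
      _ = (4*c_E*x) * (1-x)⁻¹ := by rw [tsum_geometric_of_lt_one hx0.le hxlt1]
  have hseries : (∑' n : ℕ, 2 * c_E * C ^ (n + 1) * a ^ (n + 1) /
        (((n : ℝ) + 1) * Real.Gamma (((n : ℝ) + 1) / 2))) ≤ 1/2 := by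
    have hinv : (1-x)⁻¹ ≤ 2 := by
      rw [show (2:ℝ) = ((1:ℝ)/2)⁻¹ by norm_num]
      apply inv_anti₀ (by norm_num)
      linarith
    have h16 : 16 * c_E * x ≤ 1 := by
      have := mul_le_mul_of_nonneg_left hx1 (show (0:ℝ) ≤ 16*c_E by positivity)
      calc 16*c_E*x ≤ 16*c_E*(1/(16*c_E)) := this
        _ = 1 := by field_simp
    calc (∑' n : ℕ, 2 * c_E * C ^ (n + 1) * a ^ (n + 1) /
        (((n : ℝ) + 1) * Real.Gamma (((n : ℝ) + 1) / 2))) ≤ (4*c_E*x) * (1-x)⁻¹ := htsum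
      _ ≤ (4*c_E*x) * 2 := by
          apply mul_le_mul_of_nonneg_left hinv (by positivity)
      _ = (16*c_E*x) * (1/2) := by ring
      _ ≤ 1 * (1/2) := by nlinarith
      _ = 1/2 := by ring
  -- exponential part at time T
  have ha2 : a ≤ 2*β^2/(K₂*δ^2) := min_le_right _ _
  have ha2' : a * (K₂*δ^2) ≤ 2*β^2 := (le_div_iff₀ (by positivity)).mp ha2
  have hcoef : β/δ ≤ 2*β/δ - (K₂*δ/(2*β))*a := by
    have h5 : (K₂*δ/(2*β))*a ≤ β/δ := by
      rw [div_mul_eq_mul_div, div_le_div_iff₀ (by positivity) hδ]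
      nlinarith
    have h6 : β/δ + β/δ = 2*β/δ := by ring
    linarith
  have hexp : c_E * Real.exp (-(2 * β / δ - (K₂ * δ / (2 * β)) * a) * T) ≤ 1/4 := by
    have h1 : -(2 * β / δ - (K₂ * δ / (2 * β)) * a) * T ≤ -(β/δ)*T := by
      nlinarith
    have h2 : -(β/δ)*T = -Real.log (4*c_E) := by
      rw [hTdef]; field_simp
    have h3 : Real.exp (-(2 * β / δ - (K₂ * δ / (2 * β)) * a) * T) ≤ (4*c_E)⁻¹ := by
      rw [← Real.exp_log (show (0:ℝ) < 4*c_E by positivity), ← Real.exp_neg, ← h2]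
      exact Real.exp_le_exp.mpr h1
    calc c_E * Real.exp (-(2 * β / δ - (K₂ * δ / (2 * β)) * a) * T)
        ≤ c_E * (4*c_E)⁻¹ := mul_le_mul_of_nonneg_left h3 hcE0.le
      _ = 1/4 := by field_simp
  -- G(a,T) < 1
  have hGT : contractionG c_E c_G β δ K₂ d a T < 1 := by
    unfold contractionG
    rw [← hCdef]
    linarith
  -- sInf < 1 for this a
  have hmem : contractionG c_E c_G β δ K₂ d a T ∈
      (fun t => contractionG c_E c_G β δ K₂ d a t) '' Set.Ici 0 := ⟨T, hT.le, rfl⟩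
  have key : sInf ((fun t => contractionG c_E c_G β δ K₂ d a t) '' Set.Ici 0) < 1 := by
    by_cases hb : BddBelow ((fun t => contractionG c_E c_G β δ K₂ d a t) '' Set.Ici 0)
    · exact lt_of_le_of_lt (csInf_le hb hmem) hGT
    · rw [Real.sInf_of_not_bddBelow hb]; norm_num
  clear hterm htermnn hsumg hsumf htsum hseries hcoef hexp hGT hmem hx1 hx16 hxlt1 hx0 ha2 ha2' hxdef hadef hCdef hTdef hT hlogpos hC
  clear_value x a C T
  clear x C T
  refine ⟨⟨a, ha, key⟩, ?_⟩
  -- boundedness of the admissible set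
  set S := {b : ℝ | 0 < b ∧
      sInf ((fun t => contractionG c_E c_G β δ K₂ d b t) '' Set.Ici 0) < 1} with hSdef
  have hub : ∀ b ∈ S, b ≤ 4*β^2/(K₂*δ^2) := by
    rintro b ⟨hb0, hbinf⟩
    by_contra hbig
    push_neg at hbig
    have hbig' : 4*β^2 < b * (K₂*δ^2) := (div_lt_iff₀ (by positivity)).mp hbig
    have hge : ∀ y ∈ (fun t => contractionG c_E c_G β δ K₂ d b t) '' Set.Ici 0, 1 ≤ y := by
      rintro y ⟨t, ht, rfl⟩
      simp only [Set.mem_Ici] at ht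
      have hser : (0:ℝ) ≤ ∑' n : ℕ,
          2 * c_E * (3 * Real.sqrt 2 * Real.sqrt d * c_G * (max 1 (Real.sqrt t)) *
                Real.Gamma (1 / 2) * Real.sqrt t) ^ (n + 1) * b ^ (n + 1) /
            (((n : ℝ) + 1) * Real.Gamma (((n : ℝ) + 1) / 2)) := by
        apply tsum_nonneg
        intro n
        have hb0' : (0:ℝ) ≤ b := hb0.le
        have hst : (0:ℝ) ≤ Real.sqrt t := Real.sqrt_nonneg t
        have hmax : (0:ℝ) ≤ max 1 (Real.sqrt t) := le_trans zero_le_one (le_max_left _ _)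
        have hG : (0:ℝ) < Real.Gamma (1/2) := by positivity
        positivity
      have hcoefneg : 2*β/δ - (K₂*δ/(2*β))*b ≤ 0 := by
        rw [sub_nonpos, div_mul_eq_mul_div, div_le_div_iff₀ hδ (by positivity : (0:ℝ) < 2*β)]
        nlinarith
      have hexp1 : 1 ≤ Real.exp (-(2 * β / δ - (K₂ * δ / (2 * β)) * b) * t) := by
        apply Real.one_le_exp
        have : 0 ≤ -(2*β/δ - (K₂*δ/(2*β))*b) := by linarith
        exact mul_nonneg this ht
      have : 1 ≤ c_E * Real.exp (-(2 * β / δ - (K₂ * δ / (2 * β)) * b) * t) := by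
        nlinarith
      unfold contractionG
      linarith
    have hne : ((fun t => contractionG c_E c_G β δ K₂ d b t) '' Set.Ici 0).Nonempty :=
      ⟨contractionG c_E c_G β δ K₂ d b 0, 0, Set.self_mem_Ici, rfl⟩
    have := le_csInf hne hge
    linarith
  have hbdd : BddAbove S := ⟨4*β^2/(K₂*δ^2), fun b hb => hub b hb⟩
  have haS : a ∈ S := ⟨ha, key⟩
  exact lt_of_lt_of_le ha (le_csSup hbdd haS)
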